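/- For the matrix algebra M_n(k) over a field k, the assignment (r, s) ↦ (F(r), F(s)), where F(t)(a) = Σ t⁽¹⁾ a t⁽²⁾ for t = Σ t⁽¹⁾ ⊗ t⁽²⁾ ∈ M_n(k) ⊗ M_n(k), is a bijection between the set of associative Yang-Baxter pairs on M_n(k) and the set of coupled Rota-Baxter operators on M_n(k). -/

import Mathlib

open scoped TensorProduct

/-- `Fbil x y` is the operator `a ↦ x * a * y`. -/
noncomputable def Fbil (k A : Type*) [CommSemiring k] [Ring A] [Algebra k A] :
    A →ₗ[k] A →ₗ[k] (A →ₗ[k] A) :=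
  LinearMap.mk₂ k (fun x y => (LinearMap.mulLeft k x).comp (LinearMap.mulRight k y))
    (fun x x' y => by ext a; simp [add_mul])
    (fun c x y => by ext a; simp [smul_mul_assoc])
    (fun x y y' => by ext a; simp [mul_add])
    (fun c x y => by ext a; simp [mul_smul_comm])

/-- `F2 (Σ x ⊗ y)` is the operator `a ↦ Σ x * a * y`. -/
noncomputable def F2 (k A : Type*) [CommSemiring k] [Ring A] [Algebra k A] :
    A ⊗[k] A →ₗ[k] (A →ₗ[k] A) :=
  TensorProduct.lift (Fbil k A)

/-- `r ↦ r¹² = r ⊗ 1`. -/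
noncomputable def e12 (k A : Type*) [CommSemiring k] [Ring A] [Algebra k A] :
    A ⊗[k] A →ₐ[k] (A ⊗[k] A) ⊗[k] A :=
  Algebra.TensorProduct.includeLeft

/-- `a ⊗ b ↦ (a ⊗ b)¹³ = a ⊗ 1 ⊗ b`. -/
noncomputable def e13 (k A : Type*) [CommSemiring k] [Ring A] [Algebra k A] :
    A ⊗[k] A →ₐ[k] (A ⊗[k] A) ⊗[k] A :=
  Algebra.TensorProduct.map Algebra.TensorProduct.includeLeft (AlgHom.id k A)

/-- `r ↦ r²³ = 1 ⊗ r`. -/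
noncomputable def e23 (k A : Type*) [CommSemiring k] [Ring A] [Algebra k A] :
    A ⊗[k] A →ₐ[k] (A ⊗[k] A) ⊗[k] A :=
  Algebra.TensorProduct.map Algebra.TensorProduct.includeRight (AlgHom.id k A)

@[simp] lemma F2_tmul {k A : Type*} [CommSemiring k] [Ring A] [Algebra k A] (x y a : A) :
    F2 k A (x ⊗ₜ y) a = x * a * y := by simp [F2, Fbil, mul_assoc]

/-- `Phi (Σ (x ⊗ y) ⊗ z)` is the bi-operator `(a, b) ↦ Σ x * a * y * b * z`. -/
noncomputable def Phi (k A : Type*) [CommSemiring k] [Ring A] [Algebra k A] :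
    (A ⊗[k] A) ⊗[k] A →ₗ[k] A →ₗ[k] A →ₗ[k] A :=
  TensorProduct.lift <| LinearMap.mk₂ k
    (fun u z => ((Fbil k A).flip z).comp (F2 k A u))
    (fun u u' z => by
      ext a b; simp [Fbil, LinearMap.flip_apply, add_mul])
    (fun c u z => by
      ext a b; simp [Fbil, LinearMap.flip_apply, smul_mul_assoc])
    (fun u z z' => by
      ext a b; simp [Fbil, LinearMap.flip_apply, mul_add])
    (fun c u z => by
      ext a b; simp [Fbil, LinearMap.flip_apply, mul_smul_comm])

@[simp] lemma Phi_tmul {k A : Type*} [CommSemiring k] [Ring A] [Algebra k A] (u : A ⊗[k] A)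
    (z a b : A) : Phi k A (u ⊗ₜ z) a b = F2 k A u a * b * z := by
  simp [Phi, Fbil, LinearMap.flip_apply, mul_assoc]

section EvalLemmas
variable {k A : Type*} [CommSemiring k] [Ring A] [Algebra k A]

lemma Phi_e13_e12 (r r' : A ⊗[k] A) (a b : A) :
    Phi k A (e13 k A r * e12 k A r') a b = F2 k A r (F2 k A r' a * b) := by
  induction r using TensorProduct.induction_on with
  | zero => simp
  | add u v hu hv => simp [map_add, add_mul, LinearMap.add_apply, hu, hv]
  | tmul x y =>
    induction r' using TensorProduct.induction_on with
    | zero => simp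
    | add u v hu hv => simp [map_add, mul_add, add_mul, LinearMap.add_apply, hu, hv]
    | tmul x' y' =>
      simp [e13, e12, Algebra.TensorProduct.includeLeft_apply,
        Algebra.TensorProduct.tmul_mul_tmul, mul_assoc]

lemma Phi_e12_e23 (r r' : A ⊗[k] A) (a b : A) :
    Phi k A (e12 k A r * e23 k A r') a b = F2 k A r a * F2 k A r' b := by
  induction r using TensorProduct.induction_on with
  | zero => simp
  | add u v hu hv => simp [map_add, add_mul, LinearMap.add_apply, hu, hv]
  | tmul x y =>
    induction r' using TensorProduct.induction_on with
    | zero => simp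
    | add u v hu hv => simp [map_add, mul_add, add_mul, LinearMap.add_apply, hu, hv]
    | tmul x' y' =>
      simp [e23, e12, Algebra.TensorProduct.includeLeft_apply,
        Algebra.TensorProduct.includeRight_apply, Algebra.TensorProduct.tmul_mul_tmul, mul_assoc]

lemma Phi_e23_e13 (r r' : A ⊗[k] A) (a b : A) :
    Phi k A (e23 k A r * e13 k A r') a b = F2 k A r' (a * F2 k A r b) := by
  induction r using TensorProduct.induction_on with
  | zero => simp
  | add u v hu hv => simp [map_add, add_mul, mul_add, LinearMap.add_apply, hu, hv]
  | tmul x y =>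
    induction r' using TensorProduct.induction_on with
    | zero => simp
    | add u v hu hv => simp [map_add, mul_add, add_mul, LinearMap.add_apply, hu, hv]
    | tmul x' y' =>
      simp [e23, e13, Algebra.TensorProduct.includeLeft_apply,
        Algebra.TensorProduct.includeRight_apply, Algebra.TensorProduct.tmul_mul_tmul, mul_assoc]

end EvalLemmas

section Matrixx
open Matrix
variable {k : Type*} [Field k] {n : ℕ}
local notation "A" => Matrix (Fin n) (Fin n) k

/-- Explicit inverse of `F2` on a matrix algebra. -/
noncomputable def Ginv (f : A →ₗ[k] A) : A ⊗[k] A :=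
  ∑ i : Fin n, ∑ p : Fin n, ∑ q : Fin n, ∑ l : Fin n,
    (f (single p q 1) i l) •
      (single i p (1:k) ⊗ₜ[k] single q l (1:k))

lemma Ginv_add (f g : A →ₗ[k] A) : Ginv (f + g) = Ginv f + Ginv g := by
  simp [Ginv, add_smul, Finset.sum_add_distrib]

lemma sbm_mul_mul (x : A) (i p q l : Fin n) :
    single i p (1:k) * x * single q l 1 = x p q • single i l 1 := by
  ext j m
  rw [mul_assoc]
  simp [Matrix.mul_apply, Matrix.single, ite_and, Finset.sum_ite_eq, Finset.sum_ite_eq',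
    mul_comm]

lemma mul_sbm_mul (x y : A) (i p q l : Fin n) :
    (x * single p q (1:k) * y) i l = x i p * y q l := by
  rw [mul_assoc]
  simp [Matrix.mul_apply, Matrix.single, ite_and, Finset.sum_ite_eq, Finset.sum_ite_eq',
    mul_comm]

lemma Ginv_F2 (t : A ⊗[k] A) : Ginv (F2 k A t) = t := by
  induction t using TensorProduct.induction_on with
  | zero => simp [Ginv]
  | add u v hu hv => rw [map_add, Ginv_add, hu, hv]
  | tmul x y =>
      have : ∀ i l : Fin n, ∀ p q : Fin n,
          (F2 k A (x ⊗ₜ y)) (single p q 1) i l = x i p * y q l := by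
        intro i l p q; rw [F2_tmul]; exact mul_sbm_mul x y i p q l
      rw [Ginv]
      simp only [this]
      conv_rhs => rw [matrix_eq_sum_single x, matrix_eq_sum_single y]
      rw [TensorProduct.sum_tmul]
      refine Finset.sum_congr rfl fun i _ => ?_
      rw [TensorProduct.sum_tmul]
      refine Finset.sum_congr rfl fun p _ => ?_
      rw [TensorProduct.tmul_sum]
      refine Finset.sum_congr rfl fun q _ => ?_
      rw [TensorProduct.tmul_sum]
      refine Finset.sum_congr rfl fun l _ => ?_
      have h1 : single i p (x i p) = x i p • single i p (1:k) := by
        rw [smul_single]; simp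
      have h2 : single q l (y q l) = y q l • single q l (1:k) := by
        rw [smul_single]; simp
      conv_rhs => rw [h1, h2, ← TensorProduct.smul_tmul', TensorProduct.tmul_smul, smul_smul]

lemma F2_Ginv (f : A →ₗ[k] A) : F2 k A (Ginv f) = f := by
  ext x : 1
  simp only [Ginv, map_sum, _root_.map_smul, LinearMap.sum_apply, LinearMap.smul_apply, F2_tmul]
  simp only [sbm_mul_mul]
  rw [Finset.sum_comm]
  rw [show (∑ p : Fin n, ∑ i : Fin n, ∑ q : Fin n, ∑ l : Fin n,
      f (single p q (1:k)) i l • x p q • single i l (1:k))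
    = ∑ p : Fin n, ∑ q : Fin n, ∑ i : Fin n, ∑ l : Fin n,
      f (single p q (1:k)) i l • x p q • single i l (1:k) from
    Finset.sum_congr rfl fun p _ => Finset.sum_comm]
  have key : ∀ p q : Fin n, (∑ i : Fin n, ∑ l : Fin n,
      f (single p q (1:k)) i l • x p q • single i l (1:k))
      = x p q • f (single p q (1:k)) := by
    intro p q
    conv_rhs => rw [matrix_eq_sum_single (f (single p q 1))]
    rw [Finset.smul_sum]
    refine Finset.sum_congr rfl fun i _ => ?_
    rw [Finset.smul_sum]
    refine Finset.sum_congr rfl fun l _ => ?_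
    rw [show single i l (f (single p q 1) i l)
        = f (single p q 1) i l • single i l (1:k) by
      rw [smul_single]; simp]
    rw [smul_comm]
  simp only [key]
  conv_rhs => rw [matrix_eq_sum_single x]
  rw [map_sum]
  refine Finset.sum_congr rfl fun p _ => ?_
  rw [map_sum]
  refine Finset.sum_congr rfl fun q _ => ?_
  rw [show single p q (x p q) = x p q • single p q (1:k) by
    rw [smul_single]; simp]
  rw [_root_.map_smul]

end Matrixx

section Inj
set_option synthInstance.maxHeartbeats 1000000
set_option maxHeartbeats 1600000
variable {k : Type*} [Field k] {n : ℕ}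
local notation "A" => Matrix (Fin n) (Fin n) k

lemma Phi_key (t : (A ⊗[k] A) ⊗[k] A) (a b : A) :
    Phi k A t a b
      = F2 k A (TensorProduct.rTensorHomToHomRTensor (RingHom.id k) A A A
          (LinearMap.rTensor A (F2 k A) t) a) b := by
  induction t using TensorProduct.induction_on with
  | zero => simp
  | add u v hu hv => simp [map_add, LinearMap.add_apply, hu, hv]
  | tmul u z =>
      simp [LinearMap.rTensor_tmul, TensorProduct.rTensorHomToHomRTensor_apply]

lemma Phi_eq_zero {t : (A ⊗[k] A) ⊗[k] A} (hinj : Function.Injective (F2 k A))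
    (h : Phi k A t = 0) : t = 0 := by
  have h1 : ∀ a, TensorProduct.rTensorHomToHomRTensor (RingHom.id k) A A A
      (LinearMap.rTensor A (F2 k A) t) a = 0 := by
    intro a
    apply hinj
    rw [LinearMap.map_zero (F2 k A)]
    ext b
    rw [← Phi_key, h]
    rfl
  have h2 : TensorProduct.rTensorHomToHomRTensor (RingHom.id k) A A A
      (LinearMap.rTensor A (F2 k A) t) = 0 := LinearMap.ext h1
  have h3 : Function.Injective (TensorProduct.rTensorHomToHomRTensor (RingHom.id k) A A A) := by
    rw [← rTensorHomEquivHomRTensor_toLinearMap]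
    exact (rTensorHomEquivHomRTensor k A A A).injective
  have h4 : LinearMap.rTensor A (F2 k A) t = 0 := by
    apply h3
    rw [h2, LinearMap.map_zero (TensorProduct.rTensorHomToHomRTensor (RingHom.id k) A A A)]
  have h5 : Function.Injective (LinearMap.rTensor A (F2 k A)) :=
    Module.Flat.rTensor_preserves_injective_linearMap _ hinj
  apply h5
  rw [h4, LinearMap.map_zero (LinearMap.rTensor A (F2 k A))]

end Inj

set_option maxHeartbeats 1600000 in
set_option synthInstance.maxHeartbeats 1000000 in
/-- On the matrix algebra `Mₙ(k)`, `(r, s) ↦ (F2 r, F2 s)` is a bijection from the set of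
associative Yang–Baxter pairs onto the set of coupled Rota–Baxter operators. -/
theorem stmt3 (k : Type*) [Field k] (n : ℕ) :
    Set.BijOn
      (fun p : (Matrix (Fin n) (Fin n) k ⊗[k] Matrix (Fin n) (Fin n) k) ×
               (Matrix (Fin n) (Fin n) k ⊗[k] Matrix (Fin n) (Fin n) k) =>
        (F2 k (Matrix (Fin n) (Fin n) k) p.1, F2 k (Matrix (Fin n) (Fin n) k) p.2))
      {p | e13 k _ p.1 * e12 k _ p.1 - e12 k _ p.1 * e23 k _ p.1 + e23 k _ p.2 * e13 k _ p.1 = 0 ∧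
           e13 k _ p.2 * e12 k _ p.1 - e12 k _ p.2 * e23 k _ p.2 + e23 k _ p.2 * e13 k _ p.2 = 0}
      {q : (Matrix (Fin n) (Fin n) k →ₗ[k] Matrix (Fin n) (Fin n) k) ×
           (Matrix (Fin n) (Fin n) k →ₗ[k] Matrix (Fin n) (Fin n) k) |
        ∀ a b, q.1 a * q.1 b = q.1 (q.1 a * b + a * q.2 b) ∧
               q.2 a * q.2 b = q.2 (q.1 a * b + a * q.2 b)} := by
  have hinj : Function.Injective (F2 k (Matrix (Fin n) (Fin n) k)) :=
    Function.LeftInverse.injective Ginv_F2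
  have hsurj : Function.Surjective (F2 k (Matrix (Fin n) (Fin n) k)) :=
    Function.RightInverse.surjective F2_Ginv
  refine ⟨?_, ?_, ?_⟩
  · -- MapsTo
    rintro ⟨r, s⟩ ⟨h1, h2⟩
    simp only [Set.mem_setOf_eq]
    intro a b
    constructor
    · have e1 := congrArg (fun X => Phi k (Matrix (Fin n) (Fin n) k) X a b) h1
      simp only [map_add, map_sub, map_zero, LinearMap.add_apply, LinearMap.sub_apply,
        LinearMap.zero_apply] at e1
      rw [Phi_e13_e12, Phi_e12_e23, Phi_e23_e13] at e1
      rw [map_add]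
      rw [sub_add_eq_add_sub, sub_eq_zero] at e1
      exact e1.symm
    · have e2 := congrArg (fun X => Phi k (Matrix (Fin n) (Fin n) k) X a b) h2
      simp only [map_add, map_sub, map_zero, LinearMap.add_apply, LinearMap.sub_apply,
        LinearMap.zero_apply] at e2
      rw [Phi_e13_e12, Phi_e12_e23, Phi_e23_e13] at e2
      rw [map_add]
      rw [sub_add_eq_add_sub, sub_eq_zero] at e2
      exact e2.symm
  · -- InjOn
    rintro ⟨r, s⟩ _ ⟨r', s'⟩ _ h
    simp only [Prod.mk.injEq] at h
    exact Prod.ext (hinj h.1) (hinj h.2)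
  · -- SurjOn
    rintro ⟨R, S⟩ hq
    obtain ⟨r, hr⟩ := hsurj R
    obtain ⟨s, hs⟩ := hsurj S
    refine ⟨(r, s), ⟨?_, ?_⟩, by simp [hr, hs]⟩
    · apply Phi_eq_zero hinj
      apply LinearMap.ext; intro a
      apply LinearMap.ext; intro b
      simp only [map_add, map_sub, LinearMap.add_apply, LinearMap.sub_apply,
        LinearMap.zero_apply]
      rw [Phi_e13_e12, Phi_e12_e23, Phi_e23_e13, hr, hs]
      have := (hq a b).1
      dsimp only at this
      rw [map_add] at this
      rw [this]
      abel
    · apply Phi_eq_zero hinj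
      apply LinearMap.ext; intro a
      apply LinearMap.ext; intro b
      simp only [map_add, map_sub, LinearMap.add_apply, LinearMap.sub_apply,
        LinearMap.zero_apply]
      rw [Phi_e13_e12, Phi_e12_e23, Phi_e23_e13, hr, hs]
      have := (hq a b).2
      dsimp only at this
      rw [map_add] at this
      rw [this]
      abel
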